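/- (Theorem 3) Let c_a > 0 and c_b > 0 and let T_a, T_b be independent random variables with Lévy densities of scales c_a and c_b respectively. Then the characteristic function of the noise Z_n = T_b − T_a satisfies, for every real ω: ∫₀^∞ ∫₀^∞ exp(i ω (t_b − t_a)) · f_{c_b}(t_b) · f_{c_a}(t_a) dt_a dt_b = exp( −(√c_a + √c_b)·√|ω| + i · sgn(ω) · (√c_b − √c_a)·√|ω| ). Equivalently, with c_C = (√c_a + √c_b)² and β_C = (√c_b − √c_a)/(√c_a + √c_b), the characteristic function equals exp(−√(c_C|ω|)·(1 − i β_C sgn(ω))), so Z_n is stable with stability index 1/2, scale c_C, and skewness β_C. -/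

import Mathlib

open MeasureTheory Set

/-- The Lévy density with location 0 and scale `c`. -/
noncomputable def levyPDF (c x : ℝ) : ℝ :=
  if 0 < x then Real.sqrt (c / (2 * Real.pi * x ^ 3)) * Real.exp (-c / (2 * x)) else 0

open Filter Topology

noncomputable def Gfun (a : ℂ) : ℂ := ∫ u in Ioi (0:ℝ), Complex.exp (-(u:ℂ)^2 - a/(u:ℂ)^2)

noncomputable def Hfun (a : ℂ) : ℂ :=
  (Real.sqrt Real.pi / 2 : ℝ) * Complex.exp (-2 * a ^ (1/2 : ℂ))


lemma image_sub_div (b : ℝ) (hb : 0 < b) : (fun u : ℝ => u - b/u) '' (Ioi 0) = univ := by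
  apply eq_univ_of_forall
  intro v
  have hs : 0 < Real.sqrt (v^2 + 4*b) := Real.sqrt_pos.mpr (by nlinarith [sq_nonneg v])
  have hs2 : Real.sqrt (v^2+4*b) ^ 2 = v^2 + 4*b := Real.sq_sqrt (by nlinarith [sq_nonneg v])
  have hvs : -v < Real.sqrt (v^2+4*b) := by
    nlinarith [abs_nonneg v, Real.sqrt_le_sqrt (show v^2 ≤ v^2+4*b by nlinarith),
      neg_le_abs v, Real.sqrt_sq_eq_abs v]
  set u := (v + Real.sqrt (v^2+4*b))/2 with hu_def
  have hu : (0:ℝ) < u := by simp only [hu_def]; linarith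
  refine ⟨u, mem_Ioi.mpr hu, ?_⟩
  have : b/u = u - v := by
    rw [div_eq_iff (ne_of_gt hu), hu_def]
    nlinarith [hs2]
  simp [this]

lemma image_div (b : ℝ) (hb : 0 < b) : (fun u : ℝ => b/u) '' (Ioi 0) = Ioi 0 := by
  ext v; simp only [mem_image, mem_Ioi]
  constructor
  · rintro ⟨u, hu, rfl⟩; positivity
  · intro hv; exact ⟨b/v, by positivity, by field_simp⟩

lemma base_gauss : Integrable (fun u : ℝ => Real.exp (-u^2)) (volume.restrict (Ioi 0)) := by
  have := (integrable_exp_neg_mul_sq (one_pos)).restrict (s := Ioi (0:ℝ))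
  simpa using this

lemma integrableOn_J (b : ℝ) (hb : 0 ≤ b) :
    IntegrableOn (fun u : ℝ => Real.exp (-(u - b/u)^2)) (Ioi 0) := by
  have hmeas : AEStronglyMeasurable (fun u : ℝ => Real.exp (-(u - b/u)^2))
      (volume.restrict (Ioi 0)) := by
    apply ContinuousOn.aestronglyMeasurable _ measurableSet_Ioi
    fun_prop (disch := intro x hx; rw [mem_Ioi] at hx; positivity)
  refine (base_gauss.const_mul (Real.exp (2*b))).mono hmeas ?_
  filter_upwards [ae_restrict_mem measurableSet_Ioi] with u hu
  rw [Real.norm_eq_abs, Real.abs_exp, Real.norm_eq_abs, abs_of_pos (by positivity)]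
  rw [← Real.exp_add]
  apply Real.exp_le_exp.mpr
  have hu0 : (0:ℝ) < u := hu
  have : (u - b/u)^2 = u^2 + (b/u)^2 - 2*b := by field_simp; ring
  rw [this]
  nlinarith [sq_nonneg (b/u)]

lemma integrableOn_K (b : ℝ) (hb : 0 < b) :
    IntegrableOn (fun u : ℝ => b/u^2 * Real.exp (-(u - b/u)^2)) (Ioi 0) := by
  have hmeas : AEStronglyMeasurable (fun u : ℝ => b/u^2 * Real.exp (-(u - b/u)^2))
      (volume.restrict (Ioi 0)) := by
    apply ContinuousOn.aestronglyMeasurable _ measurableSet_Ioi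
    fun_prop (disch := intro x hx; rw [mem_Ioi] at hx; positivity)
  refine (base_gauss.const_mul (Real.exp (2*b) / b)).mono hmeas ?_
  filter_upwards [ae_restrict_mem measurableSet_Ioi] with u hu
  have hu0 : (0:ℝ) < u := hu
  rw [Real.norm_eq_abs, Real.norm_eq_abs, abs_of_pos (by positivity),
    abs_of_pos (by positivity)]
  have key : (u - b/u)^2 = u^2 + (b/u)^2 - 2*b := by field_simp; ring
  rw [key]
  have hexp : Real.exp (-(u^2 + (b/u)^2 - 2*b))
      = Real.exp (2*b) * Real.exp (-u^2) * Real.exp (-(b/u)^2) := by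
    rw [← Real.exp_add, ← Real.exp_add]; congr 1; ring
  rw [hexp]
  have hx : b/u^2 = (b/u)^2 / b := by field_simp
  set x := (b/u)^2 with hxdef
  have hx0 : 0 ≤ x := sq_nonneg _
  have h2 : x * Real.exp (-x) ≤ 1 := by
    have h := Real.add_one_le_exp x
    calc x * Real.exp (-x) ≤ Real.exp x * Real.exp (-x) :=
          mul_le_mul_of_nonneg_right (by linarith) (Real.exp_pos _).le
      _ = 1 := by rw [← Real.exp_add]; simp
  calc b/u^2 * (Real.exp (2*b) * Real.exp (-u^2) * Real.exp (-x))
      = Real.exp (2*b) / b * Real.exp (-u^2) * (x * Real.exp (-x)) := by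
        rw [hx]; ring
    _ ≤ Real.exp (2*b) / b * Real.exp (-u^2) * 1 := by
        apply mul_le_mul_of_nonneg_left h2 (by positivity)
    _ = Real.exp (2*b) / b * Real.exp (-u^2) := by ring

lemma J_eq (b : ℝ) (hb : 0 < b) :
    ∫ u in Ioi (0:ℝ), Real.exp (-(u - b/u)^2) = Real.sqrt Real.pi / 2 := by
  -- substitution v = u - b/u over Ioi 0 hits all of ℝ
  have hderiv : ∀ u ∈ Ioi (0:ℝ),
      HasDerivWithinAt (fun u : ℝ => u - b/u) (1 + b/u^2) (Ioi 0) u := by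
    intro u hu
    have hu0 : (0:ℝ) < u := hu
    have h1 : HasDerivAt (fun u : ℝ => u - b/u) (1 - (0 * u - b * 1)/u^2) u :=
      (hasDerivAt_id u).sub (((hasDerivAt_const u b).div (hasDerivAt_id u) (ne_of_gt hu0)))
    have : (1 : ℝ) - (0 * u - b * 1)/u^2 = 1 + b/u^2 := by ring
    exact (this ▸ h1).hasDerivWithinAt
  have hinj : InjOn (fun u : ℝ => u - b/u) (Ioi 0) := by
    intro u hu w hw h
    have hu0 : (0:ℝ) < u := hu
    have hw0 : (0:ℝ) < w := hw
    simp only at h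
    rcases lt_trichotomy u w with hlt | he | hgt
    · have : b/w < b/u := by apply div_lt_div_of_pos_left hb hu0 hlt
      linarith
    · exact he
    · have : b/u < b/w := by apply div_lt_div_of_pos_left hb hw0 hgt
      linarith
  have hsub := integral_image_eq_integral_abs_deriv_smul measurableSet_Ioi hderiv hinj
    (fun v => Real.exp (-v^2))
  rw [image_sub_div b hb] at hsub
  have hLHS : ∫ v in (univ : Set ℝ), Real.exp (-v^2) = Real.sqrt Real.pi := by
    rw [Measure.restrict_univ]
    have := integral_gaussian 1
    simpa using this
  -- second substitution u ↦ b/u : K = J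
  have hderiv2 : ∀ u ∈ Ioi (0:ℝ),
      HasDerivWithinAt (fun u : ℝ => b/u) (-(b/u^2)) (Ioi 0) u := by
    intro u hu
    have hu0 : (0:ℝ) < u := hu
    have h1 : HasDerivAt (fun u : ℝ => b/u) ((0 * u - b * 1)/u^2) u :=
      (hasDerivAt_const u b).div (hasDerivAt_id u) (ne_of_gt hu0)
    have : (0 * u - b * 1)/u^2 = -(b/u^2) := by ring
    exact (this ▸ h1).hasDerivWithinAt
  have hinj2 : InjOn (fun u : ℝ => b/u) (Ioi 0) := by
    intro u hu w hw h
    have hu0 : (0:ℝ) < u := hu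
    have hw0 : (0:ℝ) < w := hw
    simp only at h
    rw [div_eq_div_iff (ne_of_gt hu0) (ne_of_gt hw0)] at h
    exact (mul_left_cancel₀ (ne_of_gt hb) h).symm
  have hsub2 := integral_image_eq_integral_abs_deriv_smul measurableSet_Ioi hderiv2 hinj2
    (fun t => Real.exp (-(t - b/t)^2))
  rw [image_div b hb] at hsub2
  have hKJ : ∫ u in Ioi (0:ℝ), b/u^2 * Real.exp (-(u - b/u)^2)
      = ∫ u in Ioi (0:ℝ), Real.exp (-(u - b/u)^2) := by
    rw [hsub2]
    apply setIntegral_congr_fun measurableSet_Ioi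
    intro u hu
    have hu0 : (0:ℝ) < u := hu
    have h1 : b/u - b/(b/u) = -(u - b/u) := by field_simp; ring
    simp only [smul_eq_mul, h1, abs_neg, abs_of_pos (show (0:ℝ) < b/u^2 by positivity)]
    ring_nf
  -- combine
  have hsplit : ∫ u in Ioi (0:ℝ), |1 + b/u^2| • Real.exp (-((fun u => u - b/u) u)^2)
      = (∫ u in Ioi (0:ℝ), Real.exp (-(u - b/u)^2))
        + ∫ u in Ioi (0:ℝ), b/u^2 * Real.exp (-(u - b/u)^2) := by
    rw [← integral_add (integrableOn_J b hb.le) (integrableOn_K b hb)]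
    apply setIntegral_congr_fun measurableSet_Ioi
    intro u hu
    have hu0 : (0:ℝ) < u := hu
    simp only [smul_eq_mul, abs_of_pos (show (0:ℝ) < 1 + b/u^2 by positivity)]
    ring
  rw [hLHS, hsplit, hKJ] at hsub
  linarith

lemma I_eq (r : ℝ) (hr : 0 < r) :
    ∫ u in Ioi (0:ℝ), Real.exp (-u^2 - r^2/u^2)
      = Real.sqrt Real.pi / 2 * Real.exp (-(2*r)) := by
  have h : ∀ u ∈ Ioi (0:ℝ), Real.exp (-u^2 - r^2/u^2)
      = Real.exp (-(2*r)) * Real.exp (-(u - r/u)^2) := by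
    intro u hu
    have hu0 : (0:ℝ) < u := hu
    rw [← Real.exp_add]
    congr 1
    field_simp
    ring
  rw [setIntegral_congr_fun measurableSet_Ioi h, integral_const_mul, J_eq r hr]
  ring

lemma Gfun_real (r : ℝ) (hr : 0 < r) :
    Gfun (r : ℂ) = ((Real.sqrt Real.pi / 2 * Real.exp (-(2*Real.sqrt r)) : ℝ) : ℂ) := by
  have h : ∀ u ∈ Ioi (0:ℝ), Complex.exp (-(u:ℂ)^2 - (r:ℂ)/(u:ℂ)^2)
      = ((Real.exp (-u^2 - (Real.sqrt r)^2/u^2) : ℝ) : ℂ) := by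
    intro u hu
    rw [Complex.ofReal_exp]
    congr 1
    rw [Real.sq_sqrt hr.le]
    push_cast
    ring
  rw [Gfun, setIntegral_congr_fun measurableSet_Ioi h]
  rw [show ∀ f : ℝ → ℝ, (∫ x in Ioi (0:ℝ), ((f x : ℝ) : ℂ)) = ((∫ x in Ioi (0:ℝ), f x : ℝ) : ℂ)
    from fun f => integral_ofReal, I_eq (Real.sqrt r) (Real.sqrt_pos.mpr hr)]

lemma Hfun_real (r : ℝ) (hr : 0 < r) :
    Hfun (r : ℂ) = ((Real.sqrt Real.pi / 2 * Real.exp (-(2*Real.sqrt r)) : ℝ) : ℂ) := by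
  rw [Hfun]
  have h1 : (r : ℂ) ^ (1/2 : ℂ) = ((Real.sqrt r : ℝ) : ℂ) := by
    rw [Real.sqrt_eq_rpow, Complex.ofReal_cpow hr.le]
    norm_num
  rw [h1]
  push_cast [Complex.ofReal_exp]
  ring_nf

lemma base_gauss' : Integrable (fun u : ℝ => Real.exp (-u^2)) (volume.restrict (Ioi 0)) := by
  have := (integrable_exp_neg_mul_sq (one_pos)).restrict (s := Ioi (0:ℝ))
  simpa using this

lemma re_integrand (a : ℂ) (u : ℝ) (hu : u ≠ 0) :
    (-(u:ℂ)^2 - a/(u:ℂ)^2).re = -u^2 - a.re/u^2 := by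
  have h2 : (-(u:ℂ)^2 - a/(u:ℂ)^2) = ((-u^2 : ℝ) : ℂ) - a/((u^2 : ℝ) : ℂ) := by
    push_cast; ring
  rw [h2, Complex.sub_re, Complex.div_ofReal_re, Complex.ofReal_re]

lemma norm_integrand (a : ℂ) (u : ℝ) (hu : u ≠ 0) :
    ‖Complex.exp (-(u:ℂ)^2 - a/(u:ℂ)^2)‖ = Real.exp (-u^2 - a.re/u^2) := by
  rw [Complex.norm_exp, re_integrand a u hu]

lemma contOn_integrand (a : ℂ) :
    ContinuousOn (fun u : ℝ => Complex.exp (-(u:ℂ)^2 - a/(u:ℂ)^2)) (Ioi 0) := by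
  apply Continuous.comp_continuousOn Complex.continuous_exp
  apply ContinuousOn.sub (Continuous.continuousOn (by continuity))
  exact continuousOn_const.div (Continuous.continuousOn (by continuity))
    (fun x hx => pow_ne_zero 2 (Complex.ofReal_ne_zero.mpr (ne_of_gt hx)))

lemma integrableOn_Gint (a : ℂ) (ha : 0 ≤ a.re) :
    IntegrableOn (fun u : ℝ => Complex.exp (-(u:ℂ)^2 - a/(u:ℂ)^2)) (Ioi 0) := by
  apply Integrable.mono' base_gauss'
    ((contOn_integrand a).aestronglyMeasurable measurableSet_Ioi)
  filter_upwards [ae_restrict_mem measurableSet_Ioi] with u hu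
  have hu0 : (0:ℝ) < u := hu
  rw [norm_integrand a u (ne_of_gt hu0)]
  apply Real.exp_le_exp.mpr
  have : 0 ≤ a.re/u^2 := by positivity
  linarith

lemma xexp_le (δ x : ℝ) (hδ : 0 < δ) (hx : 0 ≤ x) : x * Real.exp (-(δ*x)) ≤ 1/δ := by
  have h1 : x ≤ Real.exp (δ*x)/δ := by
    rw [le_div_iff₀ hδ]; nlinarith [Real.add_one_le_exp (δ*x)]
  calc x * Real.exp (-(δ*x)) ≤ (Real.exp (δ*x)/δ) * Real.exp (-(δ*x)) :=
        mul_le_mul_of_nonneg_right h1 (Real.exp_pos _).le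
    _ = 1/δ := by rw [div_mul_eq_mul_div, ← Real.exp_add]; simp

lemma hasDerivAt_integrand (u : ℝ) (hu : 0 < u) (a : ℂ) :
    HasDerivAt (fun a : ℂ => Complex.exp (-(u:ℂ)^2 - a/(u:ℂ)^2))
      (-(1/(u:ℂ)^2) * Complex.exp (-(u:ℂ)^2 - a/(u:ℂ)^2)) a := by
  have h0 : HasDerivAt (fun a : ℂ => -(u:ℂ)^2 - a/(u:ℂ)^2) (-(1/(u:ℂ)^2)) a := by
    simpa using ((hasDerivAt_id a).div_const ((u:ℂ)^2)).const_sub (-(u:ℂ)^2)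
  simpa [mul_comm] using h0.cexp

lemma Gfun_differentiableAt {a₀ : ℂ} (ha : 0 < a₀.re) : DifferentiableAt ℂ Gfun a₀ := by
  set δ := a₀.re / 2 with hδdef
  have hδ : 0 < δ := by positivity
  have key := hasDerivAt_integral_of_dominated_loc_of_deriv_le (μ := volume.restrict (Ioi 0))
    (F := fun a u => Complex.exp (-(u:ℂ)^2 - a/(u:ℂ)^2))
    (F' := fun a u => -(1/(u:ℂ)^2) * Complex.exp (-(u:ℂ)^2 - a/(u:ℂ)^2))
    (x₀ := a₀) (bound := fun u => (1/δ) * Real.exp (-u^2)) (s := Metric.ball a₀ δ) (Metric.ball_mem_nhds a₀ hδ)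
    ?_ ?_ ?_ ?_ ?_ ?_
  · exact key.2.differentiableAt
  · filter_upwards with a
    exact (contOn_integrand a).aestronglyMeasurable measurableSet_Ioi
  · exact integrableOn_Gint a₀ (by linarith)
  · apply AEStronglyMeasurable.mul
    · apply aestronglyMeasurable_iff_aemeasurable.mpr
      apply Measurable.aemeasurable
      fun_prop
    · exact (contOn_integrand a₀).aestronglyMeasurable measurableSet_Ioi
  · filter_upwards [ae_restrict_mem measurableSet_Ioi] with u hu a ha'
    have hu0 : (0:ℝ) < u := hu
    have hre : δ ≤ a.re := by
      have h1 : |(a - a₀).re| ≤ ‖a - a₀‖ := Complex.abs_re_le_norm _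
      rw [Metric.mem_ball, Complex.dist_eq] at ha'
      have := abs_le.mp h1
      simp only [Complex.sub_re] at this
      have h2 : ‖a - a₀‖ = ‖a - a₀‖ := rfl
      rw [hδdef]
      linarith [this.1, ha'.le, le_of_eq h2]
    rw [norm_mul, norm_integrand a u (ne_of_gt hu0)]
    have h3 : ‖-(1/(u:ℂ)^2)‖ = 1/u^2 := by
      rw [norm_neg, norm_div, norm_one, norm_pow, Complex.norm_real, Real.norm_eq_abs, abs_of_pos hu0]
    rw [h3]
    have h4 : Real.exp (-u^2 - a.re/u^2) ≤ Real.exp (-u^2) * Real.exp (-(δ * (1/u^2))) := by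
      rw [← Real.exp_add]
      apply Real.exp_le_exp.mpr
      have : δ * (1/u^2) ≤ a.re / u^2 := by
        rw [mul_one_div]
        apply div_le_div_of_nonneg_right hre (by positivity) |>.trans_eq rfl
      linarith
    calc 1/u^2 * Real.exp (-u^2 - a.re/u^2)
        ≤ 1/u^2 * (Real.exp (-u^2) * Real.exp (-(δ * (1/u^2)))) := by
          apply mul_le_mul_of_nonneg_left h4 (by positivity)
      _ = (1/u^2 * Real.exp (-(δ * (1/u^2)))) * Real.exp (-u^2) := by ring
      _ ≤ (1/δ) * Real.exp (-u^2) := by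
          apply mul_le_mul_of_nonneg_right _ (Real.exp_pos _).le
          exact xexp_le δ (1/u^2) hδ (by positivity)
  · exact base_gauss'.const_mul _
  · filter_upwards [ae_restrict_mem measurableSet_Ioi] with u hu a _
    exact hasDerivAt_integrand u hu a

lemma Hfun_differentiableAt {a₀ : ℂ} (ha : a₀ ∈ Complex.slitPlane) :
    DifferentiableAt ℂ Hfun a₀ := by
  apply DifferentiableAt.const_mul
  apply DifferentiableAt.cexp
  apply DifferentiableAt.const_mul
  exact (differentiableAt_id.cpow (differentiableAt_const _) ha)

lemma GH_eq_on_halfplane : EqOn Gfun Hfun {z : ℂ | 0 < z.re} := by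
  have hopen : IsOpen {z : ℂ | 0 < z.re} := isOpen_lt continuous_const Complex.continuous_re
  have hG : AnalyticOnNhd ℂ Gfun {z : ℂ | 0 < z.re} :=
    (DifferentiableOn.analyticOnNhd
      (fun z hz => (Gfun_differentiableAt hz).differentiableWithinAt) hopen)
  have hH : AnalyticOnNhd ℂ Hfun {z : ℂ | 0 < z.re} :=
    (DifferentiableOn.analyticOnNhd
      (fun z hz => (Hfun_differentiableAt (Or.inl hz)).differentiableWithinAt) hopen)
  have hpre : IsPreconnected {z : ℂ | 0 < z.re} := (convex_halfSpace_re_gt 0).isPreconnected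
  have hmem : (1:ℂ) ∈ {z : ℂ | 0 < z.re} := by simp
  apply hG.eqOn_of_preconnected_of_frequently_eq hH hpre hmem
  -- frequently equal near 1
  have htend : Tendsto (fun n : ℕ => ((1 + 1/(n+1) : ℝ) : ℂ)) atTop (𝓝[≠] (1:ℂ)) := by
    rw [tendsto_nhdsWithin_iff]
    constructor
    · have h0 : Tendsto (fun n : ℕ => (1 + 1/(n+1) : ℝ)) atTop (𝓝 1) := by
        have := tendsto_one_div_add_atTop_nhds_zero_nat (𝕜 := ℝ)
        have h2 := this.const_add 1
        simpa using h2
      have := (Complex.continuous_ofReal.tendsto 1).comp h0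
      simpa [Function.comp_def] using this
    · filter_upwards with n
      simp only [mem_compl_iff, mem_singleton_iff]
      intro h
      rw [show (1:ℂ) = ((1:ℝ):ℂ) by norm_num, Complex.ofReal_inj] at h
      have : (0:ℝ) < 1/((n:ℝ)+1) := by positivity
      linarith
  apply htend.frequently
  apply Frequently.of_forall
  intro n
  have hr : (0:ℝ) < 1 + 1/(n+1) := by positivity
  rw [Gfun_real _ hr, Hfun_real _ hr]

lemma GH_eq (a : ℂ) (ha : 0 ≤ a.re) : Gfun a = Hfun a := by
  rcases lt_or_eq_of_le ha with hlt | heq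
  · exact GH_eq_on_halfplane hlt
  · rcases eq_or_ne a 0 with rfl | hne
    · -- a = 0
      have hG : Gfun 0 = ((Real.sqrt Real.pi / 2 : ℝ) : ℂ) := by
        rw [Gfun]
        have h : ∀ u ∈ Ioi (0:ℝ), Complex.exp (-(u:ℂ)^2 - 0/(u:ℂ)^2)
            = ((Real.exp (-1*u^2) : ℝ) : ℂ) := by
          intro u hu
          rw [Complex.ofReal_exp]
          congr 1
          push_cast
          ring
        rw [setIntegral_congr_fun measurableSet_Ioi h]
        rw [show (∫ u in Ioi (0:ℝ), ((Real.exp (-1*u^2) : ℝ) : ℂ))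
          = ((∫ u in Ioi (0:ℝ), Real.exp (-1*u^2) : ℝ) : ℂ) from integral_ofReal]
        rw [integral_gaussian_Ioi 1]
        norm_num
      have hH : Hfun 0 = ((Real.sqrt Real.pi / 2 : ℝ) : ℂ) := by
        rw [Hfun, Complex.zero_cpow (by norm_num : (1/2 : ℂ) ≠ 0)]
        simp
      rw [hG, hH]
    · -- a.re = 0, a ≠ 0, so a.im ≠ 0
      have him : a.im ≠ 0 := by
        intro h
        exact hne (Complex.ext (heq.symm) h)
      have hslit : a ∈ Complex.slitPlane := Or.inr him
      have h1 : Tendsto (fun t : ℝ => Gfun (a + t)) (𝓝[>] 0) (𝓝 (Gfun a)) := by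
        rw [Gfun]
        apply tendsto_integral_filter_of_dominated_convergence
          (bound := fun u => Real.exp (-u^2))
        · filter_upwards with t
          exact (contOn_integrand _).aestronglyMeasurable measurableSet_Ioi
        · filter_upwards [self_mem_nhdsWithin] with t ht
          filter_upwards [ae_restrict_mem measurableSet_Ioi] with u hu
          have hu0 : (0:ℝ) < u := hu
          have ht0 : (0:ℝ) < t := ht
          rw [norm_integrand _ u (ne_of_gt hu0)]
          apply Real.exp_le_exp.mpr
          have hre : (a + (t:ℂ)).re = t := by simp [← heq]
          rw [hre]
          have : 0 ≤ t/u^2 := by positivity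
          linarith
        · exact base_gauss'
        · filter_upwards [ae_restrict_mem measurableSet_Ioi] with u hu
          have hu0 : (0:ℝ) < u := hu
          have hcont : Continuous (fun t : ℝ => Complex.exp (-(u:ℂ)^2 - (a + t)/(u:ℂ)^2)) := by
            apply Complex.continuous_exp.comp
            apply Continuous.sub continuous_const
            exact (continuous_const.add Complex.continuous_ofReal).div_const _
          have h5 : Tendsto (fun t : ℝ => Complex.exp (-(u:ℂ)^2 - (a + t)/(u:ℂ)^2))
              (𝓝[>] (0:ℝ)) (𝓝 (Complex.exp (-(u:ℂ)^2 - (a + ((0:ℝ):ℂ))/(u:ℂ)^2))) :=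
            (hcont.tendsto 0).mono_left nhdsWithin_le_nhds
          simpa using h5
      have h2 : Tendsto (fun t : ℝ => Hfun (a + t)) (𝓝[>] 0) (𝓝 (Hfun a)) := by
        have hcont : ContinuousAt Hfun a := by
          have hcp : ContinuousAt (fun z : ℂ => z ^ (1/2:ℂ)) a :=
            continuousAt_cpow_const hslit
          exact continuousAt_const.mul
            (Complex.continuous_exp.continuousAt.comp (continuousAt_const.mul hcp))
        have hmap : Tendsto (fun t : ℝ => a + (t:ℂ)) (𝓝[>] 0) (𝓝 a) := by
          have : Tendsto (fun t : ℝ => a + (t:ℂ)) (𝓝 0) (𝓝 a) := by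
            have hc : Continuous (fun t : ℝ => a + (t:ℂ)) :=
              continuous_const.add Complex.continuous_ofReal
            have := hc.tendsto (0:ℝ)
            simpa using this
          exact this.mono_left nhdsWithin_le_nhds
        exact hcont.tendsto.comp hmap
      have heqev : (fun t : ℝ => Gfun (a + t)) =ᶠ[𝓝[>] 0] (fun t : ℝ => Hfun (a + t)) := by
        filter_upwards [self_mem_nhdsWithin] with t ht
        apply GH_eq_on_halfplane
        have ht0 : (0:ℝ) < t := ht
        simp only [mem_setOf_eq, Complex.add_re, Complex.ofReal_re, ← heq]
        linarith
      exact tendsto_nhds_unique (h1.congr' heqev) h2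

lemma cpow_half_mul_I (R : ℝ) (hR : 0 < R) (σ : ℝ) (hσ : σ = 1 ∨ σ = -1) :
    ((R:ℂ) * ((σ:ℂ) * Complex.I)) ^ (1/2:ℂ)
      = ((Real.sqrt R * (Real.sqrt 2 / 2) : ℝ) : ℂ) * (1 + (σ:ℂ) * Complex.I) := by
  have hz : ((R:ℂ) * ((σ:ℂ) * Complex.I)) ≠ 0 := by
    rcases hσ with rfl | rfl <;> simp [Complex.ext_iff, ne_of_gt hR] <;>
      intro h <;> simp [h] at * <;> norm_num
  have habs : ‖((R:ℂ) * ((σ:ℂ) * Complex.I))‖ = R := by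
    rcases hσ with rfl | rfl <;>
      simp [abs_of_pos hR]
  have harg : Complex.arg ((R:ℂ) * ((σ:ℂ) * Complex.I)) = σ * (Real.pi/2) := by
    rcases hσ with rfl | rfl
    · rw [show ((1:ℝ):ℂ) * Complex.I = Complex.I by norm_num, Complex.arg_real_mul _ hR,
        Complex.arg_I]; ring
    · rw [show (((-1:ℝ)):ℂ) * Complex.I = -Complex.I by push_cast; ring,
        Complex.arg_real_mul _ hR, Complex.arg_neg_I]; ring
  rw [Complex.cpow_def_of_ne_zero hz, Complex.log, habs, harg]
  have hexp : ((↑(Real.log R) + ↑(σ * (Real.pi/2)) * Complex.I) : ℂ) * (1/2)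
      = ↑(Real.log (Real.sqrt R)) + ↑(σ * (Real.pi/4)) * Complex.I := by
    rw [Real.log_sqrt hR.le]
    push_cast
    ring
  rw [hexp, Complex.exp_add, ← Complex.ofReal_exp, Real.exp_log (Real.sqrt_pos.mpr hR),
    Complex.exp_mul_I]
  have hcos : Complex.cos (↑(Real.pi/4)) = ((Real.sqrt 2/2 : ℝ) : ℂ) := by
    rw [← Complex.ofReal_cos, Real.cos_pi_div_four]
  have hsin : Complex.sin (↑(Real.pi/4)) = ((Real.sqrt 2/2 : ℝ) : ℂ) := by
    rw [← Complex.ofReal_sin, Real.sin_pi_div_four]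
  rcases hσ with rfl | rfl
  · rw [show ((↑(1 * (Real.pi/4)) : ℂ)) = ↑(Real.pi/4) by norm_num, hcos, hsin]
    push_cast
    ring
  · rw [show ((↑(-1 * (Real.pi/4)) : ℂ)) = -↑(Real.pi/4) by push_cast; ring,
      Complex.cos_neg, Complex.sin_neg, hcos, hsin]
    push_cast
    ring

lemma levy_image (c : ℝ) (hc : 0 < c) : (fun u : ℝ => c/(2*u^2)) '' (Ioi 0) = Ioi 0 := by
  ext t; simp only [mem_image, mem_Ioi]
  constructor
  · rintro ⟨u, hu, rfl⟩; positivity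
  · intro ht
    refine ⟨Real.sqrt (c/(2*t)), Real.sqrt_pos.mpr (by positivity), ?_⟩
    rw [Real.sq_sqrt (by positivity : (0:ℝ) ≤ c/(2*t))]
    field_simp

lemma levy_deriv (c : ℝ) : ∀ u ∈ Ioi (0:ℝ),
    HasDerivWithinAt (fun u : ℝ => c/(2*u^2)) (-(c/u^3)) (Ioi 0) u := by
  intro u hu
  have hu0 : (0:ℝ) < u := hu
  have h1 : HasDerivAt (fun y : ℝ => c / (2 * y ^ 2))
      ((0 * (2 * u ^ 2) - c * (2 * (((2:ℕ):ℝ) * u ^ (2 - 1)))) / (2 * u ^ 2) ^ 2) u :=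
    (hasDerivAt_const u c).div ((hasDerivAt_pow 2 u).const_mul 2)
    (by positivity : (2:ℝ)*u^2 ≠ 0)
  refine h1.hasDerivWithinAt.congr_deriv ?_
  have hu2 : u ≠ 0 := ne_of_gt hu0
  field_simp
  ring

lemma levy_inj (c : ℝ) (hc : 0 < c) : InjOn (fun u : ℝ => c/(2*u^2)) (Ioi 0) := by
  intro u hu w hw h
  have hu0 : (0:ℝ) < u := hu
  have hw0 : (0:ℝ) < w := hw
  simp only at h
  rw [div_eq_div_iff (by positivity) (by positivity)] at h
  have h3 : 2*w^2 = 2*u^2 := mul_left_cancel₀ (ne_of_gt hc) h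
  have h2 : u^2 = w^2 := by linarith
  calc u = Real.sqrt (u^2) := (Real.sqrt_sq hu0.le).symm
    _ = Real.sqrt (w^2) := by rw [h2]
    _ = w := Real.sqrt_sq hw0.le

lemma levy_charFun (c : ℝ) (hc : 0 < c) (ω : ℝ) :
    (∫ t in Ioi (0:ℝ), Complex.exp (Complex.I * ω * t) * (levyPDF c t : ℂ))
      = Complex.exp (-((Real.sqrt c * Real.sqrt |ω|) : ℝ)
          + Complex.I * ((Real.sign ω : ℝ)) * ((Real.sqrt c * Real.sqrt |ω|) : ℝ)) := by
  set a : ℂ := -(Complex.I * ω * c / 2) with ha_def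
  have ha_re : (0:ℝ) ≤ a.re := by simp [ha_def]
  have hsqpi : (0:ℝ) < Real.sqrt Real.pi := Real.sqrt_pos.mpr Real.pi_pos
  -- substitution
  have hsub := integral_image_eq_integral_abs_deriv_smul measurableSet_Ioi (levy_deriv c)
    (levy_inj c hc) (fun t => Complex.exp (Complex.I * ω * t) * (levyPDF c t : ℂ))
  rw [levy_image c hc] at hsub
  have hcong : ∀ u ∈ Ioi (0:ℝ),
      |(-(c/u^3))| • (Complex.exp (Complex.I * ω * ((c/(2*u^2) : ℝ) : ℂ)) * (levyPDF c (c/(2*u^2)) : ℂ))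
      = ((2/Real.sqrt Real.pi : ℝ) : ℂ) * Complex.exp (-(u:ℂ)^2 - a/(u:ℂ)^2) := by
    intro u hu
    have hu0 : (0:ℝ) < u := hu
    have ht0 : (0:ℝ) < c/(2*u^2) := by positivity
    have hpdf : levyPDF c (c/(2*u^2)) = 2*u^3/(Real.sqrt Real.pi * c) * Real.exp (-u^2) := by
      rw [levyPDF, if_pos ht0]
      have h2 : -c / (2 * (c/(2*u^2))) = -u^2 := by field_simp
      have h1 : c / (2 * Real.pi * (c/(2*u^2))^3)
          = (2*u^3/(Real.sqrt Real.pi * c))^2 := by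
        have hπ : Real.sqrt Real.pi ^ 2 = Real.pi := Real.sq_sqrt Real.pi_pos.le
        field_simp
        ring_nf
        linear_combination hπ
      rw [h2, h1, Real.sqrt_sq (by positivity)]
    have habs : |(-(c/u^3))| = c/u^3 := by
      rw [abs_neg, abs_of_pos (by positivity)]
    have hexpEq : Complex.exp (-(u:ℂ)^2 - a/(u:ℂ)^2)
        = Complex.exp (Complex.I * ω * ((c/(2*u^2) : ℝ) : ℂ)) * ((Real.exp (-u^2) : ℝ) : ℂ) := by
      rw [Complex.ofReal_exp, ← Complex.exp_add]
      congr 1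
      rw [ha_def]
      have hu2 : ((u:ℂ))^2 ≠ 0 := pow_ne_zero 2 (Complex.ofReal_ne_zero.mpr (ne_of_gt hu0))
      push_cast
      field_simp
      ring
    rw [hpdf, habs, Complex.real_smul, hexpEq, Complex.ofReal_mul]
    have hreal : ((c/u^3 : ℝ) : ℂ) * ((2*u^3/(Real.sqrt Real.pi * c) : ℝ) : ℂ)
        = ((2/Real.sqrt Real.pi : ℝ) : ℂ) := by
      rw [← Complex.ofReal_mul]
      congr 1
      field_simp
    linear_combination (Complex.exp (Complex.I * ω * ((c/(2*u^2) : ℝ) : ℂ))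
      * ((Real.exp (-u^2) : ℝ) : ℂ)) * hreal
  rw [setIntegral_congr_fun measurableSet_Ioi hcong] at hsub
  rw [show (∫ u in Ioi (0:ℝ), ((2/Real.sqrt Real.pi : ℝ) : ℂ) * Complex.exp (-(u:ℂ)^2 - a/(u:ℂ)^2))
    = ((2/Real.sqrt Real.pi : ℝ) : ℂ) * Gfun a from integral_const_mul _ _] at hsub
  rw [GH_eq a ha_re, Hfun] at hsub
  have hone : ((2/Real.sqrt Real.pi : ℝ) : ℂ) * ((Real.sqrt Real.pi / 2 : ℝ) : ℂ) = 1 := by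
    rw [← Complex.ofReal_mul]
    norm_cast
    field_simp
  rw [show ((2/Real.sqrt Real.pi : ℝ) : ℂ) * (((Real.sqrt Real.pi / 2 : ℝ) : ℂ)
      * Complex.exp (-2 * a ^ (1/2:ℂ))) = (((2/Real.sqrt Real.pi : ℝ) : ℂ)
      * ((Real.sqrt Real.pi / 2 : ℝ) : ℂ)) * Complex.exp (-2 * a ^ (1/2:ℂ)) by ring,
    hone, one_mul] at hsub
  rw [hsub]
  -- now compute exp(-2 a^{1/2})
  rcases lt_trichotomy ω 0 with hω | hω | hω
  · -- ω < 0 : a = ↑(-(c*ω)/2) * (1 * I)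
    have hR : (0:ℝ) < -(c*ω)/2 := by nlinarith
    have ha' : a = ((-(c*ω)/2 : ℝ) : ℂ) * (((1:ℝ):ℂ) * Complex.I) := by
      rw [ha_def]; push_cast; ring
    rw [ha', cpow_half_mul_I _ hR 1 (Or.inl rfl), Real.sign_of_neg hω]
    have hs : Real.sqrt c * Real.sqrt |ω| = Real.sqrt (-(c*ω)/2) * Real.sqrt 2 := by
      rw [← Real.sqrt_mul hR.le, ← Real.sqrt_mul hc.le]
      congr 1
      rw [abs_of_neg hω]
      ring
    rw [hs]
    congr 1
    push_cast
    ring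
  · -- ω = 0
    subst hω
    have : a = 0 := by rw [ha_def]; push_cast; ring
    rw [this, Complex.zero_cpow (by norm_num : (1/2:ℂ) ≠ 0)]
    simp
  · -- ω > 0 : a = ↑(c*ω/2) * ((-1) * I)
    have hR : (0:ℝ) < c*ω/2 := by positivity
    have ha' : a = ((c*ω/2 : ℝ) : ℂ) * ((((-1):ℝ):ℂ) * Complex.I) := by
      rw [ha_def]; push_cast; ring
    rw [ha', cpow_half_mul_I _ hR (-1) (Or.inr rfl), Real.sign_of_pos hω]
    have hs : Real.sqrt c * Real.sqrt |ω| = Real.sqrt (c*ω/2) * Real.sqrt 2 := by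
      rw [← Real.sqrt_mul hR.le, ← Real.sqrt_mul hc.le]
      congr 1
      rw [abs_of_pos hω]
      ring
    rw [hs]
    congr 1
    push_cast
    ring

/-- Theorem 3: the characteristic function of the system C noise `Z_n = T_b - T_a`,
with `T_a, T_b` independent Lévy with scales `c_a, c_b`. With
`c_C = (√c_a + √c_b)²` and `β_C = (√c_b - √c_a)/(√c_a + √c_b)` it equals
`exp(-√(c_C|ω|)(1 - i β_C sgn ω))`. -/
theorem systemC_noise_charFun (ca cb : ℝ) (hca : 0 < ca) (hcb : 0 < cb)
    (cC βC : ℝ) (hcC : cC = (Real.sqrt ca + Real.sqrt cb) ^ 2)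
    (hβC : βC = (Real.sqrt cb - Real.sqrt ca) / (Real.sqrt ca + Real.sqrt cb)) :
    ∀ ω : ℝ,
      (∫ tb in Set.Ioi (0:ℝ), ∫ ta in Set.Ioi (0:ℝ),
          Complex.exp (Complex.I * ω * (tb - ta)) * (levyPDF cb tb : ℂ) * (levyPDF ca ta : ℂ))
        = Complex.exp (-((Real.sqrt ca + Real.sqrt cb) * Real.sqrt |ω| : ℝ)
            + Complex.I * (Real.sign ω : ℝ) * ((Real.sqrt cb - Real.sqrt ca) * Real.sqrt |ω| : ℝ))
      ∧ Complex.exp (-((Real.sqrt ca + Real.sqrt cb) * Real.sqrt |ω| : ℝ)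
            + Complex.I * (Real.sign ω : ℝ) * ((Real.sqrt cb - Real.sqrt ca) * Real.sqrt |ω| : ℝ))
        = Complex.exp (-(Real.sqrt (cC * |ω|) : ℝ)
            * (1 - Complex.I * (βC : ℝ) * (Real.sign ω : ℝ))) := by
  intro ω
  have hs : (0:ℝ) < Real.sqrt ca + Real.sqrt cb := by
    have := Real.sqrt_pos.mpr hca
    have := Real.sqrt_pos.mpr hcb
    linarith
  constructor
  · -- factor the double integral
    have hinner : ∀ tb : ℝ,
        (∫ ta in Set.Ioi (0:ℝ),
          Complex.exp (Complex.I * ω * (tb - ta)) * (levyPDF cb tb : ℂ) * (levyPDF ca ta : ℂ))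
        = (Complex.exp (Complex.I * ω * tb) * (levyPDF cb tb : ℂ))
          * ∫ ta in Set.Ioi (0:ℝ), Complex.exp (Complex.I * ((-ω : ℝ) : ℂ) * ta) * (levyPDF ca ta : ℂ) := by
      intro tb
      rw [← integral_const_mul]
      apply integral_congr_ae
      filter_upwards with ta
      rw [show Complex.I * ω * ((tb:ℂ) - ta)
        = Complex.I * ω * tb + Complex.I * ((-ω : ℝ) : ℂ) * ta by push_cast; ring, Complex.exp_add]
      ring
    calc (∫ tb in Set.Ioi (0:ℝ), ∫ ta in Set.Ioi (0:ℝ),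
            Complex.exp (Complex.I * ω * (tb - ta)) * (levyPDF cb tb : ℂ) * (levyPDF ca ta : ℂ))
        = ∫ tb in Set.Ioi (0:ℝ), (Complex.exp (Complex.I * ω * tb) * (levyPDF cb tb : ℂ))
            * ∫ ta in Set.Ioi (0:ℝ), Complex.exp (Complex.I * ((-ω : ℝ) : ℂ) * ta) * (levyPDF ca ta : ℂ) := by
          apply integral_congr_ae
          filter_upwards with tb
          exact hinner tb
      _ = (∫ tb in Set.Ioi (0:ℝ), Complex.exp (Complex.I * ω * tb) * (levyPDF cb tb : ℂ))
            * ∫ ta in Set.Ioi (0:ℝ), Complex.exp (Complex.I * ((-ω : ℝ) : ℂ) * ta) * (levyPDF ca ta : ℂ) :=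
          integral_mul_const _ _
      _ = _ := by
          rw [levy_charFun cb hcb ω, levy_charFun ca hca (-ω), ← Complex.exp_add]
          congr 1
          rw [abs_neg, Real.sign_neg]
          push_cast
          ring
  · congr 1
    have h1 : Real.sqrt (cC * |ω|) = (Real.sqrt ca + Real.sqrt cb) * Real.sqrt |ω| := by
      rw [hcC, Real.sqrt_mul (by positivity), Real.sqrt_sq hs.le]
    rw [h1, hβC]
    have key : (((Real.sqrt ca + Real.sqrt cb) * Real.sqrt |ω| : ℝ) : ℂ)
        * (((Real.sqrt cb - Real.sqrt ca) / (Real.sqrt ca + Real.sqrt cb) : ℝ) : ℂ)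
        = (((Real.sqrt cb - Real.sqrt ca) * Real.sqrt |ω| : ℝ) : ℂ) := by
      rw [← Complex.ofReal_mul]
      congr 1
      field_simp
    linear_combination (-(Complex.I * ((Real.sign ω : ℝ) : ℂ))) * key
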